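/- On ℝ⁴ with coordinates (x,y,z,w), let k > 0 and consider the SL(2,ℝ) frame X1(p) = k·(y, x, w, z), X2(p) = k·(x, −y, z, −w), X0(p) = 2k²·(−y, x, −w, z). Let f(x,y,z,w) = y − z, m = √((X1f)² + (X2f)²) = k·√((x−w)² + (y+z)²), and F = X0(f)/m = 2k(x+w)/√((x−w)² + (y+z)²) (smooth on {(x−w, y+z) ≠ (0,0)}). Define X_S acting on smooth functions u by X_S(u) = ((X2f)·X1(u) − (X1f)·X2(u))/m. Then at every point p with y = z and (x−w, y+z) ≠ (0,0): 2·X_S(F)(p) − F(p)² = −4k². -/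

import Mathlib

noncomputable def P1 : (ℝ × ℝ × ℝ × ℝ) →L[ℝ] ℝ := ContinuousLinearMap.fst ℝ ℝ (ℝ × ℝ × ℝ)
noncomputable def P2 : (ℝ × ℝ × ℝ × ℝ) →L[ℝ] ℝ :=
  (ContinuousLinearMap.fst ℝ ℝ (ℝ × ℝ)).comp (ContinuousLinearMap.snd ℝ ℝ (ℝ × ℝ × ℝ))
noncomputable def P3 : (ℝ × ℝ × ℝ × ℝ) →L[ℝ] ℝ :=
  ((ContinuousLinearMap.fst ℝ ℝ ℝ).comp (ContinuousLinearMap.snd ℝ ℝ (ℝ × ℝ))).comp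
    (ContinuousLinearMap.snd ℝ ℝ (ℝ × ℝ × ℝ))
noncomputable def P4 : (ℝ × ℝ × ℝ × ℝ) →L[ℝ] ℝ :=
  ((ContinuousLinearMap.snd ℝ ℝ ℝ).comp (ContinuousLinearMap.snd ℝ ℝ (ℝ × ℝ))).comp
    (ContinuousLinearMap.snd ℝ ℝ (ℝ × ℝ × ℝ))

@[simp] lemma P1_apply (q : ℝ × ℝ × ℝ × ℝ) : P1 q = q.1 := rfl
@[simp] lemma P2_apply (q : ℝ × ℝ × ℝ × ℝ) : P2 q = q.2.1 := rfl
@[simp] lemma P3_apply (q : ℝ × ℝ × ℝ × ℝ) : P3 q = q.2.2.1 := rfl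
@[simp] lemma P4_apply (q : ℝ × ℝ × ℝ × ℝ) : P4 q = q.2.2.2 := rfl

theorem sl2_model_surface_a3_integrand
    (k : ℝ) (hk : 0 < k)
    (X1 X2 X0 : ℝ × ℝ × ℝ × ℝ → ℝ × ℝ × ℝ × ℝ)
    (hX1 : X1 = fun p => (k * p.2.1, k * p.1, k * p.2.2.2, k * p.2.2.1))
    (hX2 : X2 = fun p => (k * p.1, -(k * p.2.1), k * p.2.2.1, -(k * p.2.2.2)))
    (hX0 : X0 = fun p =>
      (-(2 * k ^ 2 * p.2.1), 2 * k ^ 2 * p.1, -(2 * k ^ 2 * p.2.2.2), 2 * k ^ 2 * p.2.2.1))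
    (f : ℝ × ℝ × ℝ × ℝ → ℝ) (hf : f = fun p => p.2.1 - p.2.2.1)
    (X1f X2f m F : ℝ × ℝ × ℝ × ℝ → ℝ)
    (hX1f : X1f = fun q => fderiv ℝ f q (X1 q))
    (hX2f : X2f = fun q => fderiv ℝ f q (X2 q))
    (hm : m = fun q => Real.sqrt ((X1f q) ^ 2 + (X2f q) ^ 2))
    (hF : F = fun q => fderiv ℝ f q (X0 q) / m q)
    (p : ℝ × ℝ × ℝ × ℝ) (hyz : p.2.1 = p.2.2.1)
    (hne : (p.1 - p.2.2.2, p.2.1 + p.2.2.1) ≠ ((0 : ℝ), (0 : ℝ))) :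
    F p = 2 * k * (p.1 + p.2.2.2)
        / Real.sqrt ((p.1 - p.2.2.2) ^ 2 + (p.2.1 + p.2.2.1) ^ 2) ∧
    2 * ((X2f p * fderiv ℝ F p (X1 p) - X1f p * fderiv ℝ F p (X2 p)) / m p)
        - (F p) ^ 2 = -(4 * k ^ 2) := by
  have hk' : k ≠ 0 := hk.ne'
  -- fderiv of f
  have hfL : f = ⇑(P2 - P3) := by funext q; simp [hf]
  have hdf : ∀ q, fderiv ℝ f q = P2 - P3 := fun q => by
    rw [hfL]; exact ContinuousLinearMap.fderiv _
  have hX1f' : X1f = fun q => k * q.1 - k * q.2.2.2 := by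
    funext q; simp [hX1f, hdf, hX1]
  have hX2f' : X2f = fun q => -(k * q.2.1) - k * q.2.2.1 := by
    funext q; simp [hX2f, hdf, hX2]
  -- the denominator
  have hm' : m = fun q => k * Real.sqrt ((q.1 - q.2.2.2) ^ 2 + (q.2.1 + q.2.2.1) ^ 2) := by
    funext q
    rw [hm]
    simp only [hX1f', hX2f']
    have h1 : (k * q.1 - k * q.2.2.2) ^ 2 + (-(k * q.2.1) - k * q.2.2.1) ^ 2
        = k ^ 2 * ((q.1 - q.2.2.2) ^ 2 + (q.2.1 + q.2.2.1) ^ 2) := by ring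
    rw [h1, Real.sqrt_mul (sq_nonneg k), Real.sqrt_sq hk.le]
  -- closed form for F
  have hFG : F = fun q => 2 * k * (q.1 + q.2.2.2)
      / Real.sqrt ((q.1 - q.2.2.2) ^ 2 + (q.2.1 + q.2.2.1) ^ 2) := by
    funext q
    rw [hF]
    simp only [hm', hdf, hX0]
    have h1 : (P2 - P3) (-(2 * k ^ 2 * q.2.1), 2 * k ^ 2 * q.1, -(2 * k ^ 2 * q.2.2.2),
        2 * k ^ 2 * q.2.2.1) = k * (2 * k * (q.1 + q.2.2.2)) := by simp; ring
    rw [h1, mul_div_mul_left _ _ hk']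
  obtain ⟨x, y, z, w⟩ := p
  have hyz' : y = z := hyz
  subst hyz'
  simp only [Prod.mk.injEq, not_and] at hne ⊢
  set A : ℝ := (x - w) ^ 2 + (y + y) ^ 2 with hA
  have hApos : (0 : ℝ) < A := by
    rcases lt_or_eq_of_le (by positivity : (0:ℝ) ≤ A) with h | h
    · exact h
    · exfalso
      have h1 : (x - w) ^ 2 = 0 := by nlinarith [sq_nonneg (x - w), sq_nonneg (y + y)]
      have h2 : (y + y) ^ 2 = 0 := by nlinarith [sq_nonneg (x - w), sq_nonneg (y + y)]
      apply hne
      rw [Prod.mk.injEq]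
      exact ⟨pow_eq_zero_iff (n := 2) (by norm_num) |>.mp h1,
        pow_eq_zero_iff (n := 2) (by norm_num) |>.mp h2⟩
  have hs0 : Real.sqrt A ≠ 0 := Real.sqrt_ne_zero'.mpr hApos
  have hs2 : Real.sqrt A ^ 2 = A := Real.sq_sqrt hApos.le
  -- derivatives of the building blocks at the point
  have h14 : HasFDerivAt (fun q : ℝ × ℝ × ℝ × ℝ => q.1 - q.2.2.2) (P1 - P4) (x, y, y, w) := by
    have e : (fun q : ℝ × ℝ × ℝ × ℝ => q.1 - q.2.2.2) = ⇑(P1 - P4) := by funext q; simp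
    rw [e]; exact (P1 - P4).hasFDerivAt
  have h23 : HasFDerivAt (fun q : ℝ × ℝ × ℝ × ℝ => q.2.1 + q.2.2.1) (P2 + P3) (x, y, y, w) := by
    have e : (fun q : ℝ × ℝ × ℝ × ℝ => q.2.1 + q.2.2.1) = ⇑(P2 + P3) := by funext q; simp
    rw [e]; exact (P2 + P3).hasFDerivAt
  have h14' : HasFDerivAt (fun q : ℝ × ℝ × ℝ × ℝ => q.1 + q.2.2.2) (P1 + P4) (x, y, y, w) := by
    have e : (fun q : ℝ × ℝ × ℝ × ℝ => q.1 + q.2.2.2) = ⇑(P1 + P4) := by funext q; simp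
    rw [e]; exact (P1 + P4).hasFDerivAt
  have hAder : HasFDerivAt
      (fun q : ℝ × ℝ × ℝ × ℝ => (q.1 - q.2.2.2) ^ 2 + (q.2.1 + q.2.2.1) ^ 2)
      (((x - w) • (P1 - P4) + (x - w) • (P1 - P4)) + ((y + y) • (P2 + P3) + (y + y) • (P2 + P3)))
      (x, y, y, w) := by
    have e : (fun q : ℝ × ℝ × ℝ × ℝ => (q.1 - q.2.2.2) ^ 2 + (q.2.1 + q.2.2.1) ^ 2)
        = fun q : ℝ × ℝ × ℝ × ℝ =>
          (q.1 - q.2.2.2) * (q.1 - q.2.2.2) + (q.2.1 + q.2.2.1) * (q.2.1 + q.2.2.1) := by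
      funext q; ring
    rw [e]
    exact (h14.mul h14).add (h23.mul h23)
  have hsqrt := hAder.sqrt (f := fun q : ℝ × ℝ × ℝ × ℝ =>
      (q.1 - q.2.2.2) ^ 2 + (q.2.1 + q.2.2.1) ^ 2) (hApos.ne')
  have hinv := (hasDerivAt_inv hs0).comp_hasFDerivAt (x, y, y, w) hsqrt
  have hN := h14'.const_mul (2 * k)
  have hmul := hN.mul hinv
  have hFmul : F = fun q : ℝ × ℝ × ℝ × ℝ => (2 * k * (q.1 + q.2.2.2)) *
      (Real.sqrt ((q.1 - q.2.2.2) ^ 2 + (q.2.1 + q.2.2.1) ^ 2))⁻¹ := by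
    rw [hFG]; funext q; rw [div_eq_mul_inv]
  have hDF : HasFDerivAt F
      ((2 * k * (x + w)) • ((-(Real.sqrt A ^ 2)⁻¹) • ((1 / (2 * Real.sqrt A)) •
        (((x - w) • (P1 - P4) + (x - w) • (P1 - P4)) +
          ((y + y) • (P2 + P3) + (y + y) • (P2 + P3))))) +
        (Real.sqrt A)⁻¹ • ((2 * k) • (P1 + P4))) (x, y, y, w) := by
    rw [hFmul]; exact hmul
  have hdF := hDF.fderiv
  constructor
  · rw [hFG]
  · rw [hdF, hX1, hX2, hX1f', hX2f', hm', hFG]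
    simp only [ContinuousLinearMap.add_apply, ContinuousLinearMap.smul_apply,
      ContinuousLinearMap.coe_sub', ContinuousLinearMap.coe_add', Pi.sub_apply, Pi.add_apply,
      P1_apply, P2_apply, P3_apply, P4_apply, smul_eq_mul]

    rw [← hA]
    have hT : Real.sqrt A ^ 2 = (x - w) ^ 2 + (y + y) ^ 2 := by rw [hs2, hA]
    clear hdF hDF hmul hN hinv hsqrt hAder h14 h23 h14' hFmul hFG hF hm hm' hX1f hX2f hX1f'
      hX2f' hdf hfL hX0 hX1 hX2 hf hs2 hyz hne hApos hA
    clear_value A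
    generalize hT2 : Real.sqrt A = t at hs0 hT
    field_simp
    linear_combination (4 * (t ^ 2 - (x + w) ^ 2)) * hT
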